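/- For a sequence (s_k) of complex numbers, any real λ > 1, and any n with ⌊n^λ⌋ > n, the logarithmic means τ_n := (1/ℓ_n) Σ_{k=1}^n s_k/k satisfy s_n − τ_n = (ℓ_{⌊n^λ⌋}/(ℓ_{⌊n^λ⌋} − ℓ_n)) (τ_{⌊n^λ⌋} − τ_n) − (1/(ℓ_{⌊n^λ⌋} − ℓ_n)) Σ_{k=n+1}^{⌊n^λ⌋} (s_k − s_n)/k. -/

import Mathlib

open Filter

theorem lemma2_part_i
    (s : ℕ → ℂ)
    (ℓ : ℕ → ℝ) (hℓ : ∀ n, ℓ n = ∑ k ∈ Finset.Icc 1 n, (1:ℝ) / k)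
    (τ : ℕ → ℂ) (hτ : ∀ n, τ n = ((ℓ n : ℂ))⁻¹ * ∑ k ∈ Finset.Icc 1 n, s k / (k : ℂ))
    (l : ℝ) (hl : 1 < l) (n : ℕ) (hn : n < ⌊(n:ℝ) ^ l⌋₊) :
    s n - τ n =
      ((ℓ ⌊(n:ℝ) ^ l⌋₊ / (ℓ ⌊(n:ℝ) ^ l⌋₊ - ℓ n) : ℝ) : ℂ) * (τ ⌊(n:ℝ) ^ l⌋₊ - τ n)
      - (((ℓ ⌊(n:ℝ) ^ l⌋₊ - ℓ n : ℝ)) : ℂ)⁻¹ *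
          ∑ k ∈ Finset.Icc (n + 1) ⌊(n:ℝ) ^ l⌋₊, (s k - s n) / (k : ℂ) := by
  have hn1 : 1 ≤ n := by
    rcases Nat.eq_zero_or_pos n with h | h
    · subst h
      rw [show ((0:ℕ):ℝ) = 0 by norm_num, Real.zero_rpow (by linarith)] at hn
      simp at hn
    · exact h
  set m := ⌊(n:ℝ) ^ l⌋₊ with hm
  have hnm : n < m := hn
  -- ℓ n > 0
  have e : ∀ k : ℕ, Finset.Icc 1 k = Finset.Ioc 0 k := by
    intro k; ext x; simp [Nat.lt_iff_add_one_le]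
  have hLpos : 0 < ℓ n := by
    rw [hℓ]
    apply Finset.sum_pos
    · intro i hi
      simp only [Finset.mem_Icc] at hi
      have : (0:ℝ) < i := by exact_mod_cast hi.1.trans_lt' (by norm_num)
      positivity
    · exact Finset.nonempty_Icc.mpr hn1
  have hsplitR : ℓ n + ∑ k ∈ Finset.Ioc n m, (1:ℝ)/k = ℓ m := by
    rw [hℓ, hℓ, e n, e m]
    exact Finset.sum_Ioc_consecutive _ (Nat.zero_le n) hnm.le
  have hCpos : 0 < ∑ k ∈ Finset.Ioc n m, (1:ℝ)/k := by
    apply Finset.sum_pos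
    · intro i hi
      simp only [Finset.mem_Ioc] at hi
      have : (0:ℝ) < i := by exact_mod_cast (by omega : (0:ℕ) < i)
      positivity
    · exact Finset.nonempty_Ioc.mpr hnm
  have hC : ℓ m - ℓ n = ∑ k ∈ Finset.Ioc n m, (1:ℝ)/k := by linarith
  have hMpos : 0 < ℓ m := by linarith
  have hsplitC : ∑ k ∈ Finset.Icc 1 m, s k / (k:ℂ)
      = (∑ k ∈ Finset.Icc 1 n, s k / (k:ℂ)) + ∑ k ∈ Finset.Ioc n m, s k / (k:ℂ) := by
    rw [e n, e m]
    exact (Finset.sum_Ioc_consecutive _ (Nat.zero_le n) hnm.le).symm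
  have hsum : ∑ k ∈ Finset.Icc (n + 1) m, (s k - s n) / (k:ℂ)
      = (∑ k ∈ Finset.Ioc n m, s k / (k:ℂ)) - s n * ((ℓ m - ℓ n : ℝ) : ℂ) := by
    rw [Finset.Icc_add_one_left_eq_Ioc n m, hC]
    push_cast
    rw [Finset.mul_sum, ← Finset.sum_sub_distrib]
    apply Finset.sum_congr rfl
    intro k hk
    ring
  rw [hsum, hτ n, hτ m, hsplitC]
  set A := ∑ k ∈ Finset.Icc 1 n, s k / (k:ℂ)
  set B := ∑ k ∈ Finset.Ioc n m, s k / (k:ℂ)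
  have h1 : ((ℓ n : ℂ)) ≠ 0 := by exact_mod_cast hLpos.ne'
  have h2 : ((ℓ m : ℂ)) ≠ 0 := by exact_mod_cast hMpos.ne'
  have h3 : ((ℓ m : ℂ)) - (ℓ n : ℂ) ≠ 0 := by
    rw [← Complex.ofReal_sub]
    exact_mod_cast (by linarith : ℓ m - ℓ n ≠ 0)
  push_cast
  field_simp
  ring
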